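/- Define Z : ℂ × ℝ → ℂ by Z(β, α) = (1/√(2π)) · ∫_ℝ exp(−x²/2 + i·α·x³ + β·x) dx. Then for each fixed α the function β ↦ Z(β, α) is complex-differentiable on ℂ, for each fixed β the function α ↦ Z(β, α) is differentiable on ℝ, and for all (β, α): (1 − 3·i·α·β)·∂Z/∂β − 9·i·α²·∂Z/∂α − (3·i·α + β)·Z(β, α) = 0. -/

import Mathlib

open MeasureTheory Real

/-- The generating function of the cubic model with source `β`:
`Z(β, α) = (1/√(2π)) ∫ exp(-x²/2 + iαx³ + βx) dx`. -/
noncomputable def cubicZ (β : ℂ) (α : ℝ) : ℂ :=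
  (1 / Real.sqrt (2 * π) : ℝ) *
    ∫ x : ℝ, Complex.exp (-(x : ℂ) ^ 2 / 2 + Complex.I * α * (x : ℂ) ^ 3 + β * x)

-- pointwise bound
lemma key_bound (n : ℕ) (c : ℝ) (x : ℝ) :
    |x| ^ n * Real.exp (-x ^ 2 / 2 + c * x) ≤
      (n.factorial * Real.exp ((|c| + 1) ^ 2)) * Real.exp (-x ^ 2 / 4) := by
  have h1 : |x| ^ n ≤ n.factorial * Real.exp |x| := by
    have := Real.pow_div_factorial_le_exp (x := |x|) (abs_nonneg x) n
    have hn : (0:ℝ) < n.factorial := by positivity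
    calc |x| ^ n = |x| ^ n / n.factorial * n.factorial := by field_simp
    _ ≤ Real.exp |x| * n.factorial := by
        apply mul_le_mul_of_nonneg_right _ hn.le
        exact this
    _ = n.factorial * Real.exp |x| := by ring
  have h2 : -x ^ 2 / 2 + c * x + |x| ≤ -x ^ 2 / 4 + (|c| + 1) ^ 2 := by
    have hcx : c * x ≤ |c| * |x| := by
      calc c * x ≤ |c * x| := le_abs_self _
      _ = |c| * |x| := abs_mul c x
    have hx2 : x ^ 2 = |x| ^ 2 := (sq_abs x).symm
    nlinarith [sq_nonneg (|x| / 2 - (|c| + 1)), abs_nonneg x, abs_nonneg c]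
  calc |x| ^ n * Real.exp (-x ^ 2 / 2 + c * x)
      ≤ (n.factorial * Real.exp |x|) * Real.exp (-x ^ 2 / 2 + c * x) := by
        apply mul_le_mul_of_nonneg_right h1 (Real.exp_pos _).le
    _ = n.factorial * Real.exp (-x ^ 2 / 2 + c * x + |x|) := by
        rw [mul_assoc, ← Real.exp_add]; ring_nf
    _ ≤ n.factorial * Real.exp (-x ^ 2 / 4 + (|c| + 1) ^ 2) := by
        apply mul_le_mul_of_nonneg_left (Real.exp_le_exp.mpr h2) (by positivity)
    _ = (n.factorial * Real.exp ((|c| + 1) ^ 2)) * Real.exp (-x ^ 2 / 4) := by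
        rw [mul_assoc, ← Real.exp_add]; ring_nf

lemma int_aux (n : ℕ) (c : ℝ) :
    Integrable (fun x : ℝ => |x| ^ n * Real.exp (-x ^ 2 / 2 + c * x)) := by
  have hg : Integrable (fun x : ℝ =>
      (n.factorial * Real.exp ((|c| + 1) ^ 2)) * Real.exp (-(1/4) * x ^ 2)) :=
    (integrable_exp_neg_mul_sq (by norm_num)).const_mul _
  refine hg.mono' ((Continuous.mul (by fun_prop) (by fun_prop)).aestronglyMeasurable) ?_
  filter_upwards with x
  rw [Real.norm_eq_abs, abs_of_nonneg (by positivity)]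
  have := key_bound n c x
  convert this using 3 <;> ring

noncomputable def cubicE (β : ℂ) (α : ℝ) (x : ℝ) : ℂ :=
  Complex.exp (-(x : ℂ) ^ 2 / 2 + Complex.I * α * (x : ℂ) ^ 3 + β * x)

lemma norm_cubicE (β : ℂ) (α : ℝ) (x : ℝ) :
    ‖cubicE β α x‖ = Real.exp (-x ^ 2 / 2 + β.re * x) := by
  rw [cubicE, Complex.norm_exp]
  congr 1
  have : (-(x : ℂ) ^ 2 / 2 + Complex.I * α * (x : ℂ) ^ 3 + β * x) =
      Complex.ofReal (-x ^ 2 / 2) + Complex.ofReal (α * x ^ 3) * Complex.I + β * x := by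
    push_cast
    ring
  rw [this]
  have h2 : ((x : ℂ) ^ 2).re = x ^ 2 := by
    rw [← Complex.ofReal_pow]; exact Complex.ofReal_re _
  have h3 : ((x : ℂ) ^ 3).im = 0 := by
    rw [← Complex.ofReal_pow]; exact Complex.ofReal_im _
  simp [Complex.add_re, Complex.mul_re, h2, h3]

lemma continuous_cubicE (β : ℂ) (α : ℝ) : Continuous (cubicE β α) := by
  unfold cubicE
  fun_prop

lemma int_pow_cubicE (β : ℂ) (α : ℝ) (n : ℕ) :
    Integrable (fun x : ℝ => (x : ℂ) ^ n * cubicE β α x) := by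
  refine (int_aux n β.re).mono'
    ((Continuous.mul (by fun_prop) (continuous_cubicE β α)).aestronglyMeasurable) ?_
  filter_upwards with x
  rw [norm_mul, norm_pow, Complex.norm_real, norm_cubicE]
  exact le_of_eq (by rw [Real.norm_eq_abs])

lemma hasDerivAt_cubicE (β : ℂ) (α : ℝ) (x : ℝ) :
    HasDerivAt (cubicE β α)
      ((-(x : ℂ) + 3 * Complex.I * α * (x : ℂ) ^ 2 + β) * cubicE β α x) x := by
  have h1 : HasDerivAt (fun z : ℂ => -z ^ 2 / 2 + Complex.I * α * z ^ 3 + β * z)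
      (-(x : ℂ) + 3 * Complex.I * α * (x : ℂ) ^ 2 + β) (x : ℂ) := by
    have h2 := (hasDerivAt_pow 2 (x : ℂ)).neg.div_const 2
    have h3 := (hasDerivAt_pow 3 (x : ℂ)).const_mul (Complex.I * (α : ℂ))
    have h4 := (hasDerivAt_id ((x : ℝ) : ℂ)).const_mul β
    simp only [id_eq] at h4
    have h5 := (h2.add h3).add h4
    refine h5.congr_deriv ?_
    push_cast
    ring
  have h6 := h1.cexp.comp_ofReal
  have h7 : HasDerivAt (cubicE β α)
      (cubicE β α x * (-(x : ℂ) + 3 * Complex.I * α * (x : ℂ) ^ 2 + β)) x := h6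
  convert h7 using 1
  ring

lemma tendsto_pow_cubicE_atTop (β : ℂ) (α : ℝ) (n : ℕ) :
    Filter.Tendsto (fun x : ℝ => (x : ℂ) ^ n * cubicE β α x) Filter.atTop (nhds 0) := by
  apply squeeze_zero_norm (a := fun x : ℝ =>
    (n.factorial * Real.exp ((|β.re| + 1) ^ 2)) * Real.exp (-x ^ 2 / 4))
  · intro x
    rw [norm_mul, norm_pow, Complex.norm_real, norm_cubicE, Real.norm_eq_abs]
    exact key_bound n β.re x
  · have h1 : Filter.Tendsto (fun x : ℝ => -x ^ 2 / 4) Filter.atTop Filter.atBot := by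
      apply Filter.Tendsto.atBot_div_const (by norm_num : (0:ℝ) < 4)
      exact (Filter.tendsto_neg_atTop_atBot.comp (Filter.tendsto_pow_atTop (two_ne_zero)))
    have := (Real.tendsto_exp_atBot.comp h1).const_mul
      ((n.factorial : ℝ) * Real.exp ((|β.re| + 1) ^ 2))
    simpa using this

lemma tendsto_pow_cubicE_atBot (β : ℂ) (α : ℝ) (n : ℕ) :
    Filter.Tendsto (fun x : ℝ => (x : ℂ) ^ n * cubicE β α x) Filter.atBot (nhds 0) := by
  apply squeeze_zero_norm (a := fun x : ℝ =>
    (n.factorial * Real.exp ((|β.re| + 1) ^ 2)) * Real.exp (-x ^ 2 / 4))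
  · intro x
    rw [norm_mul, norm_pow, Complex.norm_real, norm_cubicE, Real.norm_eq_abs]
    exact key_bound n β.re x
  · have h1 : Filter.Tendsto (fun x : ℝ => -x ^ 2 / 4) Filter.atBot Filter.atBot := by
      apply Filter.Tendsto.atBot_div_const (by norm_num : (0:ℝ) < 4)
      have h2 : Filter.Tendsto (fun x : ℝ => x ^ 2) Filter.atBot Filter.atTop := by
        have := (Filter.tendsto_pow_atTop (two_ne_zero)).comp
          (Filter.tendsto_neg_atBot_atTop (G := ℝ))
        refine this.congr fun x => ?_
        simp [neg_sq]
      exact Filter.tendsto_neg_atTop_atBot.comp h2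
    have := (Real.tendsto_exp_atBot.comp h1).const_mul
      ((n.factorial : ℝ) * Real.exp ((|β.re| + 1) ^ 2))
    simpa using this

lemma int_aux_abs (n : ℕ) (c : ℝ) :
    Integrable (fun x : ℝ => |x| ^ n * Real.exp (-x ^ 2 / 2 + c * |x|)) := by
  refine ((int_aux n c).add (int_aux n (-c))).mono'
    ((Continuous.mul (by fun_prop) (by fun_prop)).aestronglyMeasurable) ?_
  filter_upwards with x
  rw [Real.norm_eq_abs, abs_of_nonneg (by positivity)]
  simp only [Pi.add_apply]
  have hle : Real.exp (-x ^ 2 / 2 + c * |x|) ≤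
      Real.exp (-x ^ 2 / 2 + c * x) + Real.exp (-x ^ 2 / 2 + -c * x) := by
    rcases abs_cases x with ⟨h, _⟩ | ⟨h, _⟩ <;> rw [h]
    · nlinarith [Real.exp_pos (-x ^ 2 / 2 + -c * x)]
    · have he : c * -x = -c * x := by ring
      rw [he]
      nlinarith [Real.exp_pos (-x ^ 2 / 2 + c * x)]
  calc |x| ^ n * Real.exp (-x ^ 2 / 2 + c * |x|)
      ≤ |x| ^ n * (Real.exp (-x ^ 2 / 2 + c * x) + Real.exp (-x ^ 2 / 2 + -c * x)) :=
        mul_le_mul_of_nonneg_left hle (by positivity)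
    _ = |x| ^ n * Real.exp (-x ^ 2 / 2 + c * x) + |x| ^ n * Real.exp (-x ^ 2 / 2 + -c * x) := by
        ring

lemma integral_deriv_zero {f f' : ℝ → ℂ} (hderiv : ∀ x, HasDerivAt f (f' x) x)
    (hint : Integrable f')
    (htop : Filter.Tendsto f Filter.atTop (nhds 0))
    (hbot : Filter.Tendsto f Filter.atBot (nhds 0)) :
    ∫ x : ℝ, f' x = 0 := by
  have h1 := integral_Ioi_of_hasDerivAt_of_tendsto' (a := 0)
    (fun x _ => hderiv x) hint.integrableOn htop
  have h2 := integral_Iic_of_hasDerivAt_of_tendsto' (a := 0)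
    (fun x _ => hderiv x) hint.integrableOn hbot
  rw [← intervalIntegral.integral_Iic_add_Ioi (b := 0) hint.integrableOn hint.integrableOn, h1, h2]
  ring

lemma ibp1 (β : ℂ) (α : ℝ) :
    ∫ x : ℝ, (-((x : ℂ) ^ 1 * cubicE β α x) +
      (3 * Complex.I * α) * ((x : ℂ) ^ 2 * cubicE β α x) +
      β * ((x : ℂ) ^ 0 * cubicE β α x)) = 0 := by
  apply integral_deriv_zero (f := cubicE β α)
  · intro x
    convert hasDerivAt_cubicE β α x using 1
    push_cast; ring
  · refine (((int_pow_cubicE β α 1).neg.add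
      ((int_pow_cubicE β α 2).const_mul (3 * Complex.I * α))).add
      ((int_pow_cubicE β α 0).const_mul β))
  · simpa using tendsto_pow_cubicE_atTop β α 0
  · simpa using tendsto_pow_cubicE_atBot β α 0

lemma ibp2 (β : ℂ) (α : ℝ) :
    ∫ x : ℝ, (((x : ℂ) ^ 0 * cubicE β α x) +
      β * ((x : ℂ) ^ 1 * cubicE β α x) +
      (-1 : ℂ) * ((x : ℂ) ^ 2 * cubicE β α x) +
      (3 * Complex.I * α) * ((x : ℂ) ^ 3 * cubicE β α x)) = 0 := by
  apply integral_deriv_zero (f := fun x : ℝ => (x : ℂ) * cubicE β α x)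
  · intro x
    have h1 : HasDerivAt (fun y : ℝ => ((y : ℂ))) 1 x := Complex.ofRealCLM.hasDerivAt
    have h2 := h1.mul (hasDerivAt_cubicE β α x)
    refine h2.congr_deriv ?_
    push_cast; ring
  · exact (((int_pow_cubicE β α 0).add ((int_pow_cubicE β α 1).const_mul β)).add
      ((int_pow_cubicE β α 2).const_mul (-1))).add
      ((int_pow_cubicE β α 3).const_mul (3 * Complex.I * α))
  · simpa using tendsto_pow_cubicE_atTop β α 1
  · simpa using tendsto_pow_cubicE_atBot β α 1

lemma hasDerivAt_int_beta (β : ℂ) (α : ℝ) :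
    HasDerivAt (fun b : ℂ => ∫ x : ℝ, cubicE b α x)
      (∫ x : ℝ, (x : ℂ) * cubicE β α x) β := by
  have key := hasDerivAt_integral_of_dominated_loc_of_deriv_le
    (F := fun (b : ℂ) (x : ℝ) => cubicE b α x)
    (F' := fun (b : ℂ) (x : ℝ) => (x : ℂ) * cubicE b α x)
    (bound := fun x : ℝ => |x| ^ 1 * Real.exp (-x ^ 2 / 2 + (|β.re| + 1) * |x|))
    (x₀ := β) (s := Metric.ball β 1) (Metric.ball_mem_nhds β one_pos)
    (Filter.Eventually.of_forall fun b => (continuous_cubicE b α).aestronglyMeasurable)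
    (by simpa using int_pow_cubicE β α 0)
    ((Continuous.mul (by fun_prop) (continuous_cubicE β α)).aestronglyMeasurable)
    ?_ (int_aux_abs 1 (|β.re| + 1)) ?_
  · exact key.2
  · filter_upwards with x
    intro b hb
    rw [norm_mul, Complex.norm_real, norm_cubicE, Real.norm_eq_abs, pow_one]
    apply mul_le_mul_of_nonneg_left _ (abs_nonneg x)
    apply Real.exp_le_exp.mpr
    have h1 : |b.re| ≤ |β.re| + 1 := by
      have h2 : |(b - β).re| ≤ ‖b - β‖ := Complex.abs_re_le_norm _
      have h3 : ‖b - β‖ < 1 := by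
        rw [Metric.mem_ball] at hb
        simpa [Complex.dist_eq] using hb
      calc |b.re| = |β.re + (b - β).re| := by rw [Complex.sub_re]; ring_nf
        _ ≤ |β.re| + |(b - β).re| := abs_add_le _ _
        _ ≤ |β.re| + 1 := by linarith
    have h4 : b.re * x ≤ |b.re| * |x| := by
      calc b.re * x ≤ |b.re * x| := le_abs_self _
        _ = |b.re| * |x| := abs_mul _ _
    have h5 : |b.re| * |x| ≤ (|β.re| + 1) * |x| :=
      mul_le_mul_of_nonneg_right h1 (abs_nonneg x)
    linarith
  · filter_upwards with x
    intro b _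
    have h1 := ((hasDerivAt_id b).mul_const ((x : ℂ))).const_add
      (-(x : ℂ) ^ 2 / 2 + Complex.I * (α : ℂ) * (x : ℂ) ^ 3)
    simp only [id_eq, one_mul] at h1
    have h2 := h1.cexp
    simp only [cubicE]
    refine h2.congr_deriv ?_
    ring

lemma hasDerivAt_int_alpha (β : ℂ) (α : ℝ) :
    HasDerivAt (fun a : ℝ => ∫ x : ℝ, cubicE β a x)
      (∫ x : ℝ, Complex.I * (x : ℂ) ^ 3 * cubicE β α x) α := by
  have key := hasDerivAt_integral_of_dominated_loc_of_deriv_le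
    (F := fun (a : ℝ) (x : ℝ) => cubicE β a x)
    (F' := fun (a : ℝ) (x : ℝ) => Complex.I * (x : ℂ) ^ 3 * cubicE β a x)
    (bound := fun x : ℝ => |x| ^ 3 * Real.exp (-x ^ 2 / 2 + β.re * x))
    (x₀ := α) (s := Metric.ball α 1) (Metric.ball_mem_nhds α one_pos)
    (Filter.Eventually.of_forall fun a => (continuous_cubicE β a).aestronglyMeasurable)
    (by simpa using int_pow_cubicE β α 0)
    ((Continuous.mul (by fun_prop) (continuous_cubicE β α)).aestronglyMeasurable)
    ?_ (int_aux 3 β.re) ?_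
  · exact key.2
  · filter_upwards with x
    intro a _
    rw [norm_mul, norm_mul, Complex.norm_I, one_mul, norm_pow, Complex.norm_real,
      norm_cubicE, Real.norm_eq_abs]
  · filter_upwards with x
    intro a _
    have h0 : HasDerivAt (fun t : ℝ => Complex.I * (t : ℂ) * (x : ℂ) ^ 3)
        (Complex.I * (x : ℂ) ^ 3) a := by
      have h1 := (Complex.ofRealCLM.hasDerivAt (x := a)).const_mul Complex.I
      have h2 := h1.mul_const ((x : ℂ) ^ 3)
      simpa using h2
    have h3 := ((h0.const_add (-(x : ℂ) ^ 2 / 2)).add_const (β * (x : ℂ))).cexp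
    simp only [cubicE]
    refine h3.congr_deriv ?_
    ring

/-- `Z` is complex-differentiable in `β`, real-differentiable in `α`, and satisfies
`(1 - 3iαβ) ∂Z/∂β - 9iα² ∂Z/∂α - (3iα + β) Z = 0`. -/
theorem cubicZ_first_equation :
    (∀ α : ℝ, Differentiable ℂ (fun β : ℂ => cubicZ β α)) ∧
    (∀ β : ℂ, Differentiable ℝ (fun α : ℝ => cubicZ β α)) ∧
    ∀ (β : ℂ) (α : ℝ),
      (1 - 3 * Complex.I * α * β) * deriv (fun b : ℂ => cubicZ b α) β -
        9 * Complex.I * (α : ℂ) ^ 2 * deriv (fun a : ℝ => cubicZ β a) α -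
        (3 * Complex.I * α + β) * cubicZ β α = 0 := by
  set c : ℂ := ((1 / Real.sqrt (2 * π) : ℝ) : ℂ) with hc
  have hZb : ∀ (β : ℂ) (α : ℝ), HasDerivAt (fun b : ℂ => cubicZ b α)
      (c * ∫ x : ℝ, (x : ℂ) * cubicE β α x) β := by
    intro β α
    exact (hasDerivAt_int_beta β α).const_mul c
  have hZa : ∀ (β : ℂ) (α : ℝ), HasDerivAt (fun a : ℝ => cubicZ β a)
      (c * ∫ x : ℝ, Complex.I * (x : ℂ) ^ 3 * cubicE β α x) α := by
    intro β α
    exact (hasDerivAt_int_alpha β α).const_mul c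
  refine ⟨fun α β => (hZb β α).differentiableAt, fun β α => (hZa β α).differentiableAt, ?_⟩
  intro β α
  have i0 := int_pow_cubicE β α 0
  have i1 := int_pow_cubicE β α 1
  have i2 := int_pow_cubicE β α 2
  have i3 := int_pow_cubicE β α 3
  have h1 : -(∫ x : ℝ, (x : ℂ) ^ 1 * cubicE β α x) +
      (3 * Complex.I * α) * (∫ x : ℝ, (x : ℂ) ^ 2 * cubicE β α x) +
      β * (∫ x : ℝ, (x : ℂ) ^ 0 * cubicE β α x) = 0 := by
    have j1 : Integrable (fun x : ℝ => -((x : ℂ) ^ 1 * cubicE β α x)) volume := i1.neg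
    have j2 : Integrable (fun x : ℝ => -((x : ℂ) ^ 1 * cubicE β α x) +
        (3 * Complex.I * α) * ((x : ℂ) ^ 2 * cubicE β α x)) volume := by
      exact j1.add (i2.const_mul _)
    rw [← integral_neg, ← integral_const_mul, ← integral_const_mul,
      ← integral_add j1 (i2.const_mul (3 * Complex.I * α)),
      ← integral_add j2 (i0.const_mul β)]
    exact ibp1 β α
  have h2 : (∫ x : ℝ, (x : ℂ) ^ 0 * cubicE β α x) +
      β * (∫ x : ℝ, (x : ℂ) ^ 1 * cubicE β α x) +
      (-1 : ℂ) * (∫ x : ℝ, (x : ℂ) ^ 2 * cubicE β α x) +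
      (3 * Complex.I * α) * (∫ x : ℝ, (x : ℂ) ^ 3 * cubicE β α x) = 0 := by
    have k1 : Integrable (fun x : ℝ => (x : ℂ) ^ 0 * cubicE β α x +
        β * ((x : ℂ) ^ 1 * cubicE β α x)) volume := by
      exact i0.add (i1.const_mul β)
    have k2 : Integrable (fun x : ℝ => ((x : ℂ) ^ 0 * cubicE β α x +
        β * ((x : ℂ) ^ 1 * cubicE β α x)) +
        (-1 : ℂ) * ((x : ℂ) ^ 2 * cubicE β α x)) volume := by
      exact k1.add (i2.const_mul _)
    rw [← integral_const_mul, ← integral_const_mul, ← integral_const_mul,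
      ← integral_add i0 (i1.const_mul β),
      ← integral_add k1 (i2.const_mul (-1)),
      ← integral_add k2 (i3.const_mul (3 * Complex.I * α))]
    exact ibp2 β α
  simp only [pow_zero, pow_one, one_mul] at h1 h2
  have hJ : (∫ x : ℝ, Complex.I * (x : ℂ) ^ 3 * cubicE β α x) =
      Complex.I * ∫ x : ℝ, (x : ℂ) ^ 3 * cubicE β α x := by
    simp_rw [mul_assoc]
    exact integral_const_mul _ _
  have hZ : cubicZ β α = c * ∫ x : ℝ, cubicE β α x := rfl
  rw [(hZb β α).deriv, (hZa β α).deriv, hJ, hZ]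
  linear_combination (-c) * h1 - (c * 3 * Complex.I * α) * h2
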